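/- Let λ, μ > 0 with ρ = λ/μ < 1, and let i ≥ 0 be an integer. Then EL_i(0) = i, i.e. (2/π)·ρ^{(1−i)/2}·∫₀^π (1/γ(y)²)·a_i(y)·sin(y) dy + ρ/(1−ρ) = i. -/

import Mathlib

open Real MeasureTheory Set Filter

/-- γ(y) = 1 + ρ − 2√ρ·cos(y). -/
noncomputable def gam (ρ y : ℝ) : ℝ := 1 + ρ - 2 * Real.sqrt ρ * Real.cos y

/-- a_k(y) = sin(k·y) − √ρ·sin((k+1)·y). -/
noncomputable def aco (ρ : ℝ) (k : ℕ) (y : ℝ) : ℝ :=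
  Real.sin ((k : ℝ) * y) - Real.sqrt ρ * Real.sin (((k : ℝ) + 1) * y)

/-- Transient expected queue length of an M/M/1 queue started with `i` customers. -/
noncomputable def EL (lam mu : ℝ) (i : ℕ) (t : ℝ) : ℝ :=
  (2 / Real.pi) * (lam / mu) ^ ((1 - (i : ℝ)) / 2) *
    (∫ y in (0 : ℝ)..Real.pi,
      Real.exp (-(mu * t * gam (lam / mu) y)) / (gam (lam / mu) y) ^ 2 *
        (aco (lam / mu) i y * Real.sin y)) +
  (lam / mu) / (1 - lam / mu)

/-- Transient probability that an M/M/1 queue started with `i` customers has `j` at time `t`. -/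
noncomputable def pq (lam mu : ℝ) (i j : ℕ) (t : ℝ) : ℝ :=
  (2 / Real.pi) * (lam / mu) ^ (((j : ℝ) - (i : ℝ)) / 2) *
    (∫ y in (0 : ℝ)..Real.pi,
      Real.exp (-(mu * t * gam (lam / mu) y)) / gam (lam / mu) y *
        (aco (lam / mu) i y * aco (lam / mu) j y)) +
  (1 - lam / mu) * (lam / mu) ^ j

/-- Erlang(n) density with rate `mu`: f_n(t) = μⁿ t^{n−1} e^{−μt}/(n−1)!. -/
noncomputable def erl (mu : ℝ) (n : ℕ) (t : ℝ) : ℝ :=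
  mu ^ n * t ^ (n - 1) * Real.exp (-(mu * t)) / (Nat.factorial (n - 1) : ℝ)

/-- Expected total time to complete queue with `a` customers first, then queue with `b`. -/
noncomputable def ETT (lam mu : ℝ) (a b : ℕ) : ℝ :=
  ((a : ℝ) + 2) / mu + (1 / mu) * ∫ t in Set.Ioi (0 : ℝ), erl mu (a + 1) t * EL lam mu b t


lemma ELaux_intCosZ (k : ℤ) : ∫ y in (0:ℝ)..π, Real.cos (k * y) = if k = 0 then π else 0 := by
  rcases eq_or_ne k 0 with hk | hk
  · simp [hk]
  · have hk' : (k : ℝ) ≠ 0 := Int.cast_ne_zero.mpr hk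
    rw [intervalIntegral.integral_comp_mul_left (fun x => Real.cos x) hk']
    simp [integral_cos, Real.sin_int_mul_pi, hk]

lemma ELaux_orthoCC (m n : ℕ) : ∫ y in (0:ℝ)..π, Real.cos (m*y) * Real.cos (n*y)
    = if n = m then (if m = 0 then π else π/2) else 0 := by
  have key : ∀ y : ℝ, Real.cos (m*y) * Real.cos (n*y)
      = (Real.cos ((((m:ℤ)-(n:ℤ)):ℤ) * y) + Real.cos ((((m:ℤ)+(n:ℤ)):ℤ) * y)) / 2 := by
    intro y
    push_cast
    rw [sub_mul, add_mul, Real.cos_sub, Real.cos_add]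
    ring
  simp_rw [key]
  rw [intervalIntegral.integral_div]
  rw [intervalIntegral.integral_add (by apply Continuous.intervalIntegrable; fun_prop)
    (by apply Continuous.intervalIntegrable; fun_prop)]
  rw [ELaux_intCosZ, ELaux_intCosZ]
  rcases eq_or_ne n m with h | h
  · subst h
    rcases eq_or_ne n 0 with h0 | h0
    · simp [h0]
    · have h2 : (n:ℤ) + (n:ℤ) ≠ 0 := by omega
      simp [h0, h2]
  · have h1 : (m:ℤ) - (n:ℤ) ≠ 0 := by omega
    have h2 : (m:ℤ) + (n:ℤ) ≠ 0 := by omega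
    simp [h1, h2, h]

lemma ELaux_poisson {r : ℝ} (h0 : 0 ≤ r) (h1 : r < 1) (y : ℝ) :
    HasSum (fun n : ℕ => r^n * Real.cos (n*y))
      ((1 - r*Real.cos y)/(1 + r^2 - 2*r*Real.cos y)) := by
  set z : ℂ := (r : ℂ) * Complex.exp (y * Complex.I) with hz
  have hnz : ‖z‖ < 1 := by
    rw [hz, norm_mul, Complex.norm_exp]
    simp [Complex.norm_real, abs_of_nonneg h0, h1]
  have hs := hasSum_geometric_of_norm_lt_one hnz
  have hre := hs.mapL Complex.reCLM
  have hterm : ∀ n : ℕ, Complex.reCLM (z ^ n) = r^n * Real.cos (n*y) := by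
    intro n
    rw [hz, mul_pow, ← Complex.exp_nat_mul]
    simp only [Complex.reCLM_apply]
    rw [show (n : ℂ) * (y * Complex.I) = ((n * y : ℝ) : ℂ) * Complex.I by push_cast; ring]
    rw [show ((r:ℂ))^n = ((r^n : ℝ):ℂ) by push_cast; ring]
    rw [Complex.re_ofReal_mul, Complex.exp_ofReal_mul_I_re]
  have h1re : (1 - z).re = 1 - r * Real.cos y := by
    rw [hz]
    rw [show (y:ℂ) * Complex.I = ((y:ℝ):ℂ) * Complex.I from rfl]
    simp [Complex.sub_re, Complex.re_ofReal_mul, Complex.exp_ofReal_mul_I_re]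
  have h1im : (1 - z).im = - (r * Real.sin y) := by
    rw [hz]
    simp [Complex.sub_im, Complex.im_ofReal_mul, Complex.exp_ofReal_mul_I_im]
  have h2 : Complex.normSq (1 - z) = 1 + r^2 - 2*r*Real.cos y := by
    rw [Complex.normSq_apply, h1re, h1im]
    have := Real.sin_sq_add_cos_sq y
    nlinarith [this]
  have hval : Complex.reCLM ((1 - z)⁻¹) = (1 - r*Real.cos y)/(1 + r^2 - 2*r*Real.cos y) := by
    simp only [Complex.reCLM_apply, Complex.inv_re]
    rw [h1re, h2]
  rw [← hval]
  exact HasSum.congr_fun hre fun n => (hterm n).symm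
lemma ELaux_gamPos {r : ℝ} (h0 : 0 ≤ r) (h1 : r < 1) (y : ℝ) :
    0 < 1 + r^2 - 2*r*Real.cos y := by
  nlinarith [Real.cos_le_one y, Real.neg_one_le_cos y]

lemma ELaux_gamCont {r : ℝ} : Continuous (fun y : ℝ => 1 + r^2 - 2*r*Real.cos y) := by fun_prop

lemma ELaux_cosC {r : ℝ} (h0 : 0 ≤ r) (h1 : r < 1) (m : ℕ) :
    ∫ y in (0:ℝ)..π, Real.cos (m*y) / (1 + r^2 - 2*r*Real.cos y)
      = π * r^m / (1 - r^2) := by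
  have hγ := ELaux_gamPos h0 h1
  have hγne : ∀ y, (1 + r^2 - 2*r*Real.cos y) ≠ 0 := fun y => (hγ y).ne'
  set γ : ℝ → ℝ := fun y => 1 + r^2 - 2*r*Real.cos y with hγdef
  have hcontinv : Continuous fun y => (γ y)⁻¹ := ELaux_gamCont.inv₀ hγne
  -- the series computation of J
  set F : ℕ → ℝ → ℝ := fun n y => Real.cos (m*y) * (r^n * Real.cos (n*y)) with hF
  have hFint : ∀ n, IntegrableOn (F n) (Ioc (0:ℝ) π) volume := by
    intro n
    exact (Continuous.integrableOn_Ioc (by fun_prop))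
  have hFnorm : ∀ n, (∫ y in Ioc (0:ℝ) π, ‖F n y‖) ≤ π * r^n := by
    intro n
    have hb : ∀ y, ‖F n y‖ ≤ r^n := by
      intro y
      rw [hF]
      simp only [norm_mul, Real.norm_eq_abs]
      calc |Real.cos (m*y)| * (|r^n| * |Real.cos (n*y)|)
          ≤ 1 * (r^n * 1) := by
            apply mul_le_mul (Real.abs_cos_le_one _) ?_ (by positivity) one_pos.le
            rw [abs_of_nonneg (by positivity : (0:ℝ) ≤ r^n)]
            exact mul_le_mul_of_nonneg_left (Real.abs_cos_le_one _) (by positivity)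
        _ = r^n := by ring
    calc (∫ y in Ioc (0:ℝ) π, ‖F n y‖)
        ≤ ∫ _ in Ioc (0:ℝ) π, r^n := by
          apply integral_mono ((hFint n).norm) (integrableOn_const measure_Ioc_lt_top.ne) hb
      _ = π * r^n := by
          rw [setIntegral_const]
          simp [Real.volume_Ioc, ENNReal.toReal_ofReal Real.pi_pos.le, Real.pi_pos.le]
  have hsum_geo : Summable fun n : ℕ => π * r^n :=
    (summable_geometric_of_lt_one h0 h1).mul_left π
  have hFsum : Summable fun n => ∫ y in Ioc (0:ℝ) π, ‖F n y‖ := by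
    apply Summable.of_nonneg_of_le (fun n => integral_nonneg (fun y => norm_nonneg _)) hFnorm hsum_geo
  have hkey := MeasureTheory.hasSum_integral_of_summable_integral_norm
    (μ := volume.restrict (Ioc (0:ℝ) π)) (fun n => hFint n) hFsum
  -- pointwise sum
  have hpt : ∀ y : ℝ, (∑' n, F n y) = Real.cos (m*y) * ((1 - r*Real.cos y)/(γ y)) := by
    intro y
    exact ((ELaux_poisson h0 h1 y).mul_left (Real.cos (m*y))).tsum_eq
  -- each term integral
  have hterm : ∀ n, (∫ y in Ioc (0:ℝ) π, F n y)
      = r^n * (if n = m then (if m = 0 then π else π/2) else 0) := by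
    intro n
    have : (∫ y in Ioc (0:ℝ) π, F n y) = ∫ y in (0:ℝ)..π, F n y := by
      rw [intervalIntegral.integral_of_le Real.pi_pos.le]
    rw [this, hF]
    simp only
    simp_rw [mul_left_comm]
    rw [intervalIntegral.integral_const_mul, ELaux_orthoCC]
  -- conclude value of J
  have hJ : (∫ y in (0:ℝ)..π, Real.cos (m*y) * ((1 - r*Real.cos y)/(γ y)))
      = r^m * (if m = 0 then π else π/2) := by
    have h2 : (∫ y in Ioc (0:ℝ) π, ∑' i, F i y)
        = ∫ y in (0:ℝ)..π, Real.cos (m*y) * ((1 - r*Real.cos y)/(γ y)) := by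
      rw [intervalIntegral.integral_of_le Real.pi_pos.le]
      exact setIntegral_congr_fun measurableSet_Ioc (fun y _ => hpt y)
    have h3 : HasSum (fun n => r^n * (if n = m then (if m = 0 then π else π/2) else 0))
        (∫ y in (0:ℝ)..π, Real.cos (m*y) * ((1 - r*Real.cos y)/(γ y))) := by
      rw [← h2]
      exact hkey.congr_fun fun n => (hterm n).symm
    have h4 : HasSum (fun n => r^n * (if n = m then (if m = 0 then π else π/2) else 0))
        (r^m * (if m = 0 then π else π/2)) := by
      have := hasSum_ite_eq m (r^m * (if m = 0 then π else π/2))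
      apply this.congr_fun
      intro n
      by_cases h : n = m <;> simp [h]
    exact h3.unique h4
  -- decompose (1 - r cos y)/γ = 1/2 + (1-r²)/(2γ)
  have hdec : ∀ y : ℝ, Real.cos (m*y) * ((1 - r*Real.cos y)/(γ y))
      = Real.cos (m*y) * (1/2) + ((1-r^2)/2) * (Real.cos (m*y) / γ y) := by
    intro y
    have hne : γ y ≠ 0 := hγne y
    field_simp
    ring
  have hsplit : (∫ y in (0:ℝ)..π, Real.cos (m*y) * ((1 - r*Real.cos y)/(γ y)))
      = (∫ y in (0:ℝ)..π, Real.cos (m*y)) * (1/2)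
        + ((1-r^2)/2) * (∫ y in (0:ℝ)..π, Real.cos (m*y) / γ y) := by
    have hi1 : IntervalIntegrable (fun y : ℝ => Real.cos (m*y) * (1/2)) volume 0 π := by
      apply Continuous.intervalIntegrable; fun_prop
    have hi2 : IntervalIntegrable (fun y : ℝ => ((1-r^2)/2) * (Real.cos (m*y) / γ y)) volume 0 π := by
      apply Continuous.intervalIntegrable
      exact continuous_const.mul (((Real.continuous_cos.comp (by fun_prop)).div ELaux_gamCont hγne))
    simp_rw [hdec]
    rw [intervalIntegral.integral_add hi1 hi2, intervalIntegral.integral_mul_const,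
      intervalIntegral.integral_const_mul]
  have hr2 : (1:ℝ) - r^2 ≠ 0 := by nlinarith
  have hcosm : (∫ y in (0:ℝ)..π, Real.cos (m*y)) = if m = 0 then π else 0 := by
    have := ELaux_intCosZ (m : ℤ)
    simpa using this
  rw [hJ, hcosm] at hsplit
  rcases eq_or_ne m 0 with h | h
  · simp only [h, if_true, pow_zero] at hsplit ⊢
    field_simp at hsplit ⊢
    linarith
  · simp only [h, if_false] at hsplit ⊢
    field_simp at hsplit ⊢
    linarith

/-- EL_i(0) = i. -/
theorem EL_at_zero (lam mu : ℝ) (hlam : 0 < lam) (hmu : 0 < mu)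
    (hρ : lam / mu < 1) (i : ℕ) :
    EL lam mu i 0 = (i : ℝ) := by
  set ρ : ℝ := lam / mu with hρdef
  have hρ0 : 0 < ρ := div_pos hlam hmu
  set r : ℝ := Real.sqrt ρ with hrdef
  have hr0 : 0 < r := Real.sqrt_pos.mpr hρ0
  have hr2 : r^2 = ρ := Real.sq_sqrt hρ0.le
  have hr1 : r < 1 := by
    nlinarith [hr2, hρ]
  have hγpos := ELaux_gamPos hr0.le hr1
  have hγne : ∀ y, (1 + r^2 - 2*r*Real.cos y) ≠ 0 := fun y => (hγpos y).ne'
  have hgam : ∀ y, gam ρ y = 1 + r^2 - 2*r*Real.cos y := fun y => by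
    rw [gam, hr2, hrdef]
  set γ : ℝ → ℝ := fun y => 1 + r^2 - 2*r*Real.cos y with hγdef
  -- functions for IBP
  set u : ℝ → ℝ := fun y => Real.sin (i*y) - r * Real.sin ((i+1)*y) with hu
  set u' : ℝ → ℝ := fun y => (i:ℝ) * Real.cos (i*y) - r * ((i+1) * Real.cos ((i+1)*y)) with hu'
  set v : ℝ → ℝ := fun y => (γ y)⁻¹ with hv
  set v' : ℝ → ℝ := fun y => -(2*r*Real.sin y) / (γ y)^2 with hv'
  have hderiv_u : ∀ y : ℝ, HasDerivAt u (u' y) y := by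
    intro y
    have hlin : ∀ c : ℝ, HasDerivAt (fun x : ℝ => c * x) c y := by
      intro c; simpa using (hasDerivAt_id y).const_mul c
    have h1 : HasDerivAt (fun y : ℝ => Real.sin ((i:ℝ)*y)) (Real.cos ((i:ℝ)*y) * (i:ℝ)) y :=
      (hlin (i:ℝ)).sin
    have h2 : HasDerivAt (fun y : ℝ => Real.sin (((i:ℝ)+1)*y)) (Real.cos (((i:ℝ)+1)*y) * ((i:ℝ)+1)) y :=
      (hlin ((i:ℝ)+1)).sin
    have h3 := h1.sub (h2.const_mul r)
    have : u' y = Real.cos ((i:ℝ)*y) * (i:ℝ) - r * (Real.cos (((i:ℝ)+1)*y) * ((i:ℝ)+1)) := by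
      simp only [hu']; ring
    rw [hu, this]
    exact h3
  have hderiv_v : ∀ y : ℝ, HasDerivAt v (v' y) y := by
    intro y
    have hγd : HasDerivAt γ (2*r*Real.sin y) y := by
      have h4 := ((Real.hasDerivAt_cos y).const_mul (2*r)).const_sub (1+r^2)
      have : (2*r*Real.sin y) = -(2*r*(-Real.sin y)) := by ring
      rw [hγdef, this]
      exact h4
    have := hγd.inv (hγne y)
    rw [hv, hv']
    exact this
  -- boundary values
  have hu0 : u 0 = 0 := by simp [hu]
  have huπ : u π = 0 := by
    have h1 : Real.sin ((i:ℝ)*π) = 0 := Real.sin_nat_mul_pi i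
    have h2 : Real.sin (((i:ℝ)+1)*π) = 0 := by
      have := Real.sin_nat_mul_pi (i+1)
      push_cast at this
      exact this
    simp [hu, h1, h2]
  -- integrability
  have hCu' : Continuous u' := by fun_prop
  have hCv' : Continuous v' := by
    apply Continuous.div (by fun_prop) (by fun_prop)
    intro y; exact pow_ne_zero 2 (hγne y)
  have hCv : Continuous v := ELaux_gamCont.inv₀ hγne
  have hCu : Continuous u := by fun_prop
  -- IBP
  have hibp := intervalIntegral.integral_mul_deriv_eq_deriv_mul_of_hasDerivAt
    (a := 0) (b := π) (u := u) (v := v) (u' := u') (v' := v')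
    (hCu.continuousOn) (hCv.continuousOn)
    (fun x _ => hderiv_u x) (fun x _ => hderiv_v x)
    (hCu'.intervalIntegrable _ _) (hCv'.intervalIntegrable _ _)
  rw [hu0, huπ] at hibp
  simp only [zero_mul, sub_zero, zero_sub] at hibp
  -- compute ∫ u' * v
  have hsplitint : (∫ y in (0:ℝ)..π, u' y * v y)
      = (i:ℝ) * (π * r^i / (1-r^2)) - (r*((i:ℝ)+1)) * (π * r^(i+1) / (1-r^2)) := by
    have e1 : ∀ y : ℝ, u' y * v y
        = (i:ℝ) * (Real.cos ((i:ℕ)*y) / γ y) - (r*((i:ℝ)+1)) * (Real.cos (((i+1:ℕ))*y) / γ y) := by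
      intro y
      simp only [hu', hv]
      push_cast
      field_simp
    simp_rw [e1]
    have hint1 : IntervalIntegrable (fun y : ℝ => (i:ℝ) * (Real.cos ((i:ℕ)*y) / γ y)) volume 0 π := by
      apply Continuous.intervalIntegrable
      exact continuous_const.mul ((by fun_prop : Continuous fun y:ℝ => Real.cos ((i:ℕ)*y)).div ELaux_gamCont hγne)
    have hint2 : IntervalIntegrable (fun y : ℝ => (r*((i:ℝ)+1)) * (Real.cos (((i+1:ℕ))*y) / γ y)) volume 0 π := by
      apply Continuous.intervalIntegrable
      exact continuous_const.mul ((by fun_prop : Continuous fun y:ℝ => Real.cos (((i+1:ℕ))*y)).div ELaux_gamCont hγne)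
    rw [intervalIntegral.integral_sub hint1 hint2,
      intervalIntegral.integral_const_mul, intervalIntegral.integral_const_mul,
      ELaux_cosC hr0.le hr1 i, ELaux_cosC hr0.le hr1 (i+1)]
  -- the main integral
  have hmain : (∫ y in (0 : ℝ)..π,
      Real.exp (-(mu * 0 * gam ρ y)) / (gam ρ y) ^ 2 * (aco ρ i y * Real.sin y))
      = (1/(2*r)) * ((i:ℝ) * (π * r^i / (1-r^2)) - (r*((i:ℝ)+1)) * (π * r^(i+1) / (1-r^2))) := by
    have e2 : ∀ y : ℝ, Real.exp (-(mu * 0 * gam ρ y)) / (gam ρ y) ^ 2 * (aco ρ i y * Real.sin y)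
        = (-(1/(2*r))) * (u y * v' y) := by
      intro y
      rw [hgam y]
      simp only [mul_zero, zero_mul, neg_zero, Real.exp_zero, aco, hu, hv', ← hrdef]
      have := hγne y
      field_simp
      ring
    simp_rw [e2]
    rw [intervalIntegral.integral_const_mul, hibp, hsplitint]
    field_simp
  -- final algebra
  simp only [EL, ← hρdef]
  rw [hmain]
  have hrpow : ρ ^ ((1 - (i : ℝ)) / 2) = r ^ ((1:ℝ) - i) := by
    rw [← hr2, ← Real.rpow_natCast r 2, ← Real.rpow_mul hr0.le]
    ring_nf
  rw [hrpow]
  have hA : r ^ ((1:ℝ) - i) * r^i = r := by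
    rw [← Real.rpow_natCast r i, ← Real.rpow_add hr0]
    norm_num
  have hB : r ^ ((1:ℝ) - i) * r^(i+1) = r^2 := by
    rw [← Real.rpow_natCast r (i+1), ← Real.rpow_add hr0]
    push_cast
    rw [show (1:ℝ) - i + (i+1) = 2 by ring, ← Real.rpow_natCast r 2]
    norm_num
  have h1r2 : (1:ℝ) - r^2 ≠ 0 := by nlinarith
  have hπ : (π:ℝ) ≠ 0 := Real.pi_ne_zero
  rw [← hr2]
  set X : ℝ := r ^ ((1:ℝ) - i) with hX
  set P : ℝ := r^i with hP
  have hQ : r^(i+1) = P * r := by rw [hP, pow_succ]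
  rw [hQ] at hB
  rw [hQ]
  field_simp
  rw [hP] at hA
  linear_combination ((i:ℝ) - r^2 - r^2*i) * hA
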